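/- Let (X_i,T_i), i ∈ ℕ, be topological dynamical systems with diam(X_i) ≤ 1 and let π_i : (X_{i+1},T_{i+1}) → (X_i,T_i) be factor maps. Let X = {(x_i)_{i∈ℕ} ∈ ∏_i X_i : π_i(x_{i+1}) = x_i for all i} be the inverse limit, endowed with the metric ρ((x_i),(y_i)) = Σ_i 2^{-i} ρ_i(x_i,y_i) and the induced homeomorphism T((x_i)) = (T_i x_i). Fix d ∈ ℕ. If x = (x_i), y = (y_i) ∈ X are such that (x_i,y_i) ∈ AP^[d](X_i,T_i) for every i, then (x,y) ∈ AP^[d](X,T). -/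

import Mathlib

/-- The regionally proximal relation of order `d` along arithmetic progressions, with
respect to an explicitly given distance function `ρ`. -/
def APdist {X : Type*} (ρ : X → X → ℝ) (T : Equiv.Perm X) (d : ℕ) (x y : X) : Prop :=
  ∀ δ : ℝ, 0 < δ → ∃ x' y' : X, ∃ n : ℤ,
    ρ x x' < δ ∧ ρ y y' < δ ∧
    ∀ i : ℕ, 1 ≤ i → i ≤ d →
      ρ ((T ^ ((i : ℤ) * n)) x') ((T ^ ((i : ℤ) * n)) y') < δ

/-- The inverse limit of the sequence of systems `(X i)` along the bonding maps `π i`. -/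
def InvLimit {X : ℕ → Type*} (π : ∀ i, X (i + 1) → X i) : Type _ :=
  {z : ∀ i, X i // ∀ i, π i (z (i + 1)) = z i}

/-- The induced homeomorphism on the inverse limit, `T (z_i)_i = (T_i z_i)_i`. -/
def limMap {X : ℕ → Type*} (T : ∀ i, Equiv.Perm (X i)) (π : ∀ i, X (i + 1) → X i)
    (hcomm : ∀ i x, π i (T (i + 1) x) = T i (π i x)) : Equiv.Perm (InvLimit π) where
  toFun z := ⟨fun i => T i (z.1 i), fun i => by rw [hcomm, z.2]⟩
  invFun z := ⟨fun i => (T i).symm (z.1 i), fun i => by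
    have h := hcomm i ((T (i + 1)).symm (z.1 (i + 1)))
    rw [Equiv.apply_symm_apply, z.2 i] at h
    show π i ((T (i + 1)).symm (z.1 (i + 1))) = (T i).symm (z.1 i)
    rw [h, Equiv.symm_apply_apply]⟩
  left_inv z := Subtype.ext (funext fun i => (T i).symm_apply_apply _)
  right_inv z := Subtype.ext (funext fun i => (T i).apply_symm_apply _)

/-- The metric `ρ((x_i), (y_i)) = ∑_i 2^{-i} ρ_i(x_i, y_i)` on the inverse limit. -/
noncomputable def limDist {X : ℕ → Type*} [∀ i, MetricSpace (X i)]
    (π : ∀ i, X (i + 1) → X i) (x y : InvLimit π) : ℝ :=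
  ∑' i : ℕ, (1 / 2 ^ i : ℝ) * dist (x.1 i) (y.1 i)

section auxlemmas
variable {X : ℕ → Type*}

/-- The composed bonding map from level `j` down to level `i ≤ j`. -/
def Pmap (π : ∀ i, X (i + 1) → X i) : ∀ j, X j → ∀ i, i ≤ j → X i
  | 0, w, 0, _ => w
  | 0, _, i+1, h => absurd h (by omega)
  | j+1, w, i, h =>
    if h' : i ≤ j then Pmap π j (π j w) i h'
    else cast (congrArg X (show j + 1 = i by omega)) w

lemma Pmap_step (π : ∀ i, X (i + 1) → X i) (j : ℕ) (w : X (j+1)) (i : ℕ) (h' : i ≤ j)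
    (h : i ≤ j + 1) : Pmap π (j+1) w i h = Pmap π j (π j w) i h' := by
  rw [Pmap, dif_pos h']

lemma Pmap_self (π : ∀ i, X (i + 1) → X i) : ∀ (j : ℕ) (w : X j) (h : j ≤ j), Pmap π j w j h = w
  | 0, w, _ => rfl
  | j+1, w, h => by
    rw [Pmap, dif_neg (by omega)]
    exact eq_of_heq (cast_heq _ _)

lemma Pmap_comp (π : ∀ i, X (i + 1) → X i) : ∀ (j : ℕ) (w : X j) (i : ℕ) (h : i + 1 ≤ j)
    (h2 : i ≤ j), π i (Pmap π j w (i+1) h) = Pmap π j w i h2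
  | 0, w, i, h, h2 => absurd h (by omega)
  | j+1, w, i, h, h2 => by
    by_cases hq : i + 1 ≤ j
    · rw [Pmap_step π j w (i+1) hq h, Pmap_step π j w i (by omega) h2,
        Pmap_comp π j (π j w) i hq (by omega)]
    · have : i = j := by omega
      subst this
      rw [Pmap_self, Pmap_step π i w i le_rfl h2, Pmap_self]

lemma Pmap_invLimit (π : ∀ i, X (i + 1) → X i) (z : InvLimit π) :
    ∀ (N i : ℕ) (h : i ≤ N), Pmap π N (z.1 N) i h = z.1 i
  | 0, 0, _ => rfl
  | N+1, i, h => by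
    by_cases hq : i ≤ N
    · rw [Pmap_step π N (z.1 (N+1)) i hq h, z.2 N, Pmap_invLimit π z N i hq]
    · have : i = N + 1 := by omega
      subst this
      rw [Pmap_self]

lemma Pmap_comm_T (π : ∀ i, X (i + 1) → X i) (T : ∀ i, Equiv.Perm (X i))
    (hcomm : ∀ i x, π i (T (i + 1) x) = T i (π i x)) :
    ∀ (j : ℕ) (w : X j) (i : ℕ) (h : i ≤ j),
      Pmap π j (T j w) i h = T i (Pmap π j w i h)
  | 0, w, 0, _ => rfl
  | 0, w, i+1, h => absurd h (by omega)
  | j+1, w, i, h => by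
    by_cases hq : i ≤ j
    · rw [Pmap_step π j (T (j+1) w) i hq h, Pmap_step π j w i hq h, hcomm]
      exact Pmap_comm_T π T hcomm j (π j w) i hq
    · have : i = j + 1 := by omega
      subst this
      rw [Pmap_self, Pmap_self]

lemma Pmap_comm_Tsymm (π : ∀ i, X (i + 1) → X i) (T : ∀ i, Equiv.Perm (X i))
    (hcomm : ∀ i x, π i (T (i + 1) x) = T i (π i x))
    (j : ℕ) (w : X j) (i : ℕ) (h : i ≤ j) :
    Pmap π j ((T j).symm w) i h = (T i).symm (Pmap π j w i h) := by
  have := Pmap_comm_T π T hcomm j ((T j).symm w) i h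
  rw [Equiv.apply_symm_apply] at this
  rw [this, Equiv.symm_apply_apply]

lemma Pmap_comm_Tzpow (π : ∀ i, X (i + 1) → X i) (T : ∀ i, Equiv.Perm (X i))
    (hcomm : ∀ i x, π i (T (i + 1) x) = T i (π i x))
    (m : ℤ) (j : ℕ) (w : X j) (i : ℕ) (h : i ≤ j) :
    Pmap π j (((T j) ^ m) w) i h = ((T i) ^ m) (Pmap π j w i h) := by
  induction m using Int.induction_on generalizing w with
  | zero => simp
  | succ k ih =>
    have h1 : ∀ (N : ℕ) (v : X N), ((T N) ^ ((k : ℤ) + 1)) v = ((T N) ^ (k : ℤ)) (T N v) := by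
      intro N v
      rw [zpow_add_one]
      rfl
    rw [h1, h1, ih (T j w), Pmap_comm_T π T hcomm j w i h]
  | pred k ih =>
    have h1 : ∀ (N : ℕ) (v : X N), ((T N) ^ (-(k : ℤ) - 1)) v
        = ((T N) ^ (-(k : ℤ))) ((T N).symm v) := by
      intro N v
      rw [zpow_sub_one]
      rfl
    rw [h1, h1, ih ((T j).symm w), Pmap_comm_Tsymm π T hcomm j w i h]

lemma Pmap_continuous [∀ i, MetricSpace (X i)] (π : ∀ i, X (i + 1) → X i)
    (hπc : ∀ i, Continuous (π i)) :
    ∀ (j i : ℕ) (h : i ≤ j), Continuous (fun w : X j => Pmap π j w i h)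
  | 0, 0, _ => continuous_id
  | 0, i+1, h => absurd h (by omega)
  | j+1, i, h => by
    by_cases hq : i ≤ j
    · have : (fun w : X (j+1) => Pmap π (j+1) w i h)
          = (fun w : X j => Pmap π j w i hq) ∘ (π j) := by
        funext w; exact Pmap_step π j w i hq h
      rw [this]
      exact (Pmap_continuous π hπc j i hq).comp (hπc j)
    · have : i = j + 1 := by omega
      subst this
      have : (fun w : X (j+1) => Pmap π (j+1) w (j+1) h) = id := by
        funext w; exact Pmap_self π (j+1) w h
      rw [this]; exact continuous_id

lemma exists_ext (π : ∀ i, X (i + 1) → X i) (hπs : ∀ i, Function.Surjective (π i))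
    (N : ℕ) (w : X N) :
    ∃ z : InvLimit π, ∀ i (h : i ≤ N), z.1 i = Pmap π N w i h := by
  let u : ∀ k, X (N + k) := fun k => Nat.rec (motive := fun k => X (N + k)) w
    (fun k uk => (hπs (N + k) uk).choose) k
  have hu : ∀ k, π (N + k) (u (k + 1)) = u k := fun k => (hπs (N + k) (u k)).choose_spec
  have h5 : ∀ (k i : ℕ) (h : i ≤ N),
      Pmap π (N + k) (u k) i (by omega) = Pmap π N w i h := by
    intro k
    induction k with
    | zero => intro i h; rfl
    | succ k ih =>
      intro i h
      show Pmap π ((N + k) + 1) (u (k+1)) i (by omega) = _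
      rw [Pmap_step π (N + k) (u (k+1)) i (by omega) (by omega), hu k, ih i h]
  refine ⟨⟨fun j => Pmap π (N + j) (u j) j (by omega), ?_⟩, ?_⟩
  · intro j
    show π j (Pmap π ((N + j) + 1) (u (j+1)) (j+1) _) = _
    rw [Pmap_comp π ((N+j)+1) (u (j+1)) j (by omega) (by omega),
      Pmap_step π (N + j) (u (j+1)) j (by omega) (by omega), hu j]
  · intro i h
    exact h5 i i h

lemma limMap_zpow (T : ∀ i, Equiv.Perm (X i)) (π : ∀ i, X (i + 1) → X i)
    (hcomm : ∀ i x, π i (T (i + 1) x) = T i (π i x)) (m : ℤ) (z : InvLimit π) (i : ℕ) :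
    (((limMap T π hcomm) ^ m) z).1 i = ((T i) ^ m) (z.1 i) := by
  induction m using Int.induction_on generalizing z with
  | zero => simp
  | succ k ih =>
    have h1 : ∀ (v : InvLimit π), ((limMap T π hcomm) ^ ((k : ℤ) + 1)) v
        = ((limMap T π hcomm) ^ (k : ℤ)) (limMap T π hcomm v) := by
      intro v; rw [zpow_add_one]; rfl
    have h2 : ((T i) ^ ((k : ℤ) + 1)) (z.1 i) = ((T i) ^ (k : ℤ)) (T i (z.1 i)) := by
      rw [zpow_add_one]; rfl
    rw [h1, h2, ih]
    rfl
  | pred k ih =>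
    have h1 : ∀ (v : InvLimit π), ((limMap T π hcomm) ^ (-(k : ℤ) - 1)) v
        = ((limMap T π hcomm) ^ (-(k : ℤ))) ((limMap T π hcomm).symm v) := by
      intro v; rw [zpow_sub_one]; rfl
    have h2 : ((T i) ^ (-(k : ℤ) - 1)) (z.1 i) = ((T i) ^ (-(k : ℤ))) ((T i).symm (z.1 i)) := by
      rw [zpow_sub_one]; rfl
    rw [h1, h2, ih]
    rfl

end auxlemmas

lemma limDist_lt {X : ℕ → Type*} [∀ i, MetricSpace (X i)] [∀ i, CompactSpace (X i)]
    (hdiam : ∀ i, Metric.diam (Set.univ : Set (X i)) ≤ 1)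
    (π : ∀ i, X (i + 1) → X i) (N : ℕ) (δ : ℝ) (hδ : 0 < δ)
    (hN : (1/2 : ℝ) ^ N < δ/2) (z z' : InvLimit π)
    (hz : ∀ i, i ≤ N → dist (z.1 i) (z'.1 i) < δ/8) : limDist π z z' < δ := by
  have hd1 : ∀ i, dist (z.1 i) (z'.1 i) ≤ 1 := fun i =>
    le_trans (Metric.dist_le_diam_of_mem (Metric.isBounded_of_compactSpace)
      (Set.mem_univ _) (Set.mem_univ _)) (hdiam i)
  set f : ℕ → ℝ := fun i => (1 / 2 ^ i : ℝ) * dist (z.1 i) (z'.1 i) with hf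
  have hfnn : ∀ i, 0 ≤ f i := fun i => mul_nonneg (by positivity) dist_nonneg
  have hfle : ∀ i, f i ≤ (1/2 : ℝ) ^ i := by
    intro i
    have : (1 / 2 ^ i : ℝ) = (1/2 : ℝ) ^ i := by rw [one_div_pow]
    rw [hf]; dsimp only; rw [this]
    calc (1/2 : ℝ) ^ i * dist (z.1 i) (z'.1 i) ≤ (1/2 : ℝ) ^ i * 1 :=
          mul_le_mul_of_nonneg_left (hd1 i) (by positivity)
      _ = (1/2 : ℝ) ^ i := mul_one _
  have hgeom : Summable (fun i : ℕ => (1/2 : ℝ) ^ i) :=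
    summable_geometric_of_lt_one (by norm_num) (by norm_num)
  have hsum : Summable f := Summable.of_nonneg_of_le hfnn hfle hgeom
  have hsplit := Summable.sum_add_tsum_nat_add (N+1) hsum
  have hhead : ∑ i ∈ Finset.range (N+1), f i ≤ δ/4 := by
    calc ∑ i ∈ Finset.range (N+1), f i
        ≤ ∑ i ∈ Finset.range (N+1), (1/2 : ℝ) ^ i * (δ/8) := by
          apply Finset.sum_le_sum
          intro i hi
          have hi' : i ≤ N := by simpa using Nat.lt_succ_iff.mp (Finset.mem_range.mp hi)
          have : (1 / 2 ^ i : ℝ) = (1/2 : ℝ) ^ i := by rw [one_div_pow]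
          rw [hf]; dsimp only; rw [this]
          exact mul_le_mul_of_nonneg_left (le_of_lt (hz i hi')) (by positivity)
      _ = (∑ i ∈ Finset.range (N+1), (1/2 : ℝ) ^ i) * (δ/8) := by
          rw [Finset.sum_mul]
      _ ≤ 2 * (δ/8) := by
          apply mul_le_mul_of_nonneg_right _ (by positivity)
          calc (∑ i ∈ Finset.range (N+1), (1/2 : ℝ) ^ i)
              ≤ ∑' i : ℕ, (1/2 : ℝ) ^ i :=
                Summable.sum_le_tsum _ (fun i _ => by positivity) hgeom
            _ = 2 := by rw [tsum_geometric_of_lt_one (by norm_num) (by norm_num)]; norm_num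
      _ = δ/4 := by ring
  have htail : ∑' i : ℕ, f (i + (N+1)) ≤ (1/2 : ℝ) ^ N := by
    calc ∑' i : ℕ, f (i + (N+1)) ≤ ∑' i : ℕ, (1/2 : ℝ) ^ (i + (N+1)) :=
          Summable.tsum_le_tsum (fun i => hfle _) ((summable_nat_add_iff (N+1)).mpr hsum)
            ((summable_nat_add_iff (N+1)).mpr hgeom)
      _ = (∑' i : ℕ, (1/2 : ℝ) ^ i) * (1/2 : ℝ) ^ (N+1) := by
          simp only [pow_add]
          rw [tsum_mul_right]
      _ = 2 * (1/2 : ℝ) ^ (N+1) := by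
          rw [tsum_geometric_of_lt_one (by norm_num) (by norm_num)]; norm_num
      _ = (1/2 : ℝ) ^ N := by rw [pow_succ]; ring
  have heq : limDist π z z' = ∑ i ∈ Finset.range (N+1), f i + ∑' i : ℕ, f (i + (N+1)) :=
    hsplit.symm
  rw [heq]
  calc ∑ i ∈ Finset.range (N+1), f i + ∑' i : ℕ, f (i + (N+1))
      ≤ δ/4 + (1/2 : ℝ) ^ N := add_le_add hhead htail
    _ < δ/4 + δ/2 := by linarith
    _ < δ := by linarith

/-- Let `(X_i, T_i)` be t.d.s. with `diam X_i ≤ 1` and `π_i` factor maps,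
let `(X, T)` be the inverse limit with the metric `ρ = ∑ 2^{-i} ρ_i`.  If
`(x_i, y_i) ∈ AP^[d](X_i, T_i)` for every `i`, then `(x, y) ∈ AP^[d](X, T)`. -/
theorem ap_of_invLimit {X : ℕ → Type*} [∀ i, MetricSpace (X i)] [∀ i, CompactSpace (X i)]
    (hdiam : ∀ i, Metric.diam (Set.univ : Set (X i)) ≤ 1)
    (T : ∀ i, Equiv.Perm (X i))
    (hTc : ∀ i, Continuous (T i)) (hTc' : ∀ i, Continuous (T i).symm)
    (π : ∀ i, X (i + 1) → X i)
    (hπc : ∀ i, Continuous (π i)) (hπs : ∀ i, Function.Surjective (π i))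
    (hcomm : ∀ i x, π i (T (i + 1) x) = T i (π i x))
    (d : ℕ) (x y : InvLimit π)
    (h : ∀ i, APdist dist (T i) d (x.1 i) (y.1 i)) :
    APdist (limDist π) (limMap T π hcomm) d x y := by
  intro δ hδ
  obtain ⟨N, hN⟩ : ∃ N : ℕ, (1/2 : ℝ) ^ N < δ/2 :=
    exists_pow_lt_of_lt_one (by positivity) (by norm_num)
  have key : ∀ i (hi : i ≤ N), ∃ η > (0:ℝ), ∀ a b : X N, dist a b < η →
      dist (Pmap π N a i hi) (Pmap π N b i hi) < δ/8 := by
    intro i hi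
    have hc : Continuous (fun w : X N => Pmap π N w i hi) := Pmap_continuous π hπc N i hi
    have hu : UniformContinuous (fun w : X N => Pmap π N w i hi) :=
      CompactSpace.uniformContinuous_of_continuous hc
    rcases Metric.uniformContinuous_iff.mp hu (δ/8) (by positivity) with ⟨η, hη, hball⟩
    exact ⟨η, hη, fun a b hab => hball hab⟩
  set g : ℕ → ℝ := fun i => if hi : i ≤ N then (key i hi).choose else 1 with hg
  have hgpos : ∀ i, 0 < g i := by
    intro i; rw [hg]; dsimp only
    split
    · exact (key i ‹_›).choose_spec.1
    · norm_num
  set η : ℝ := (Finset.range (N+1)).inf' ⟨0, by simp⟩ g with hη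
  have hηpos : 0 < η := by
    rw [hη]; exact (Finset.lt_inf'_iff _).2 (fun i _ => hgpos i)
  have keyη : ∀ i (hi : i ≤ N) (a b : X N), dist a b < η →
      dist (Pmap π N a i hi) (Pmap π N b i hi) < δ/8 := by
    intro i hi a b hab
    have h0 : η ≤ g i := Finset.inf'_le g (Finset.mem_range.mpr (by omega))
    have h1 : η ≤ (key i hi).choose := by
      rw [hg] at h0; dsimp only at h0; rwa [dif_pos hi] at h0
    exact (key i hi).choose_spec.2 a b (lt_of_lt_of_le hab h1)
  obtain ⟨x', y', n, hx', hy', hAP⟩ := h N η hηpos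
  obtain ⟨zx, hzx⟩ := exists_ext π hπs N x'
  obtain ⟨zy, hzy⟩ := exists_ext π hπs N y'
  refine ⟨zx, zy, n, ?_, ?_, ?_⟩
  · apply limDist_lt hdiam π N δ hδ hN
    intro i hi
    rw [hzx i hi, ← Pmap_invLimit π x N i hi]
    exact keyη i hi _ _ hx'
  · apply limDist_lt hdiam π N δ hδ hN
    intro i hi
    rw [hzy i hi, ← Pmap_invLimit π y N i hi]
    exact keyη i hi _ _ hy'
  · intro j hj1 hj2
    apply limDist_lt hdiam π N δ hδ hN
    intro i hi
    rw [limMap_zpow T π hcomm ((j : ℤ) * n) zx i, limMap_zpow T π hcomm ((j : ℤ) * n) zy i,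
      hzx i hi, hzy i hi, ← Pmap_comm_Tzpow π T hcomm ((j : ℤ) * n) N x' i hi,
      ← Pmap_comm_Tzpow π T hcomm ((j : ℤ) * n) N y' i hi]
    exact keyη i hi _ _ (hAP j hj1 hj2)
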